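/- Let $u \in L^2(\mathbb{R})$ with $\hat u$ supported in $\{a \le |\omega| \le b\}$ for some $0 < a \le b$, and suppose $(u_j)_{j\in\mathbb{Z}}$ with $u_j(x) = 2^j u(2^j x)$ is a TI-frame of $L^2(\mathbb{R})$ with bounds $A, B$. Define $v_j$ by $\hat v_j(\omega) = 2^{-j}(-i\omega)\hat u_j(\omega)$. Then $(v_j)_{j\in\mathbb{Z}}$ is a TI-frame of $L^2(\mathbb{R})$ with bounds $a^2 A$ and $b^2 B$, and $(u_j, v_j, 2^{-j})_{j\in\mathbb{Z}}$ satisfies the quasi-singular value relation $v_j^* \ast (\mathcal{I}f) = 2^{-j}(u_j^* \ast f)$ for all $f$ in the domain of the integration operator $\mathcal{I}$; i.e., it is a TI-DFD for $\mathcal{I}$. -/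

import Mathlib

open MeasureTheory Complex Real
open scoped Classical

noncomputable section

/-- `L2R` is the Hilbert space `L²(ℝ, ℂ)`. -/
abbrev L2R := MeasureTheory.Lp ℂ 2 (volume : Measure ℝ)

/-- An extension of the Fourier transform (normalization `f̂(ω) = ∫ f(x) e^{-ixω} dx`)
to a linear bijection of `L²(ℝ)` satisfying the Plancherel identity `‖f̂‖² = 2π ‖f‖²`. -/
structure FourierL2R where
  F : L2R ≃ₗ[ℂ] L2R
  plancherel : ∀ f : L2R, ‖F f‖ ^ 2 = (2 * Real.pi) * ‖f‖ ^ 2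
  eq_integral : ∀ f : L2R, MeasureTheory.Integrable (f : ℝ → ℂ) →
    (F f : ℝ → ℂ) =ᵐ[volume]
      fun ω => ∫ x : ℝ, Complex.exp (-(Complex.I * ω * x)) * f x

/-- The convolution `u^* ∗ f := 𝓕⁻¹((conj 𝓕u) ⬝ 𝓕f)`, well defined in `L²` whenever
`𝓕u ∈ L^∞`. -/
def starConvR (Φ : FourierL2R) (u f : L2R) : L2R :=
  if h : MemLp (fun ω => (starRingEnd ℂ) ((Φ.F u : ℝ → ℂ) ω) * (Φ.F f : ℝ → ℂ) ω)
      2 (volume : Measure ℝ)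
  then Φ.F.symm (h.toLp _) else 0

/-- `(u_λ)` is a translation invariant frame of `L²(ℝ)` with bounds `A, B`. -/
def IsTIFrameR {Λ : Type*} (Φ : FourierL2R) (u : Λ → L2R) (A B : ℝ) : Prop :=
  (∀ l : Λ, MemLp ((Φ.F (u l) : ℝ → ℂ)) ⊤ (volume : Measure ℝ)) ∧
  0 < A ∧ 0 < B ∧
  ∀ f : L2R,
    A * ‖f‖ ^ 2 ≤ ∑' l : Λ, ‖starConvR Φ (u l) f‖ ^ 2 ∧
    ∑' l : Λ, ‖starConvR Φ (u l) f‖ ^ 2 ≤ B * ‖f‖ ^ 2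

/-- Domain of the integration operator: `f ∈ L²` with `(iω)⁻¹ f̂(ω) ∈ L²`. -/
def IDom (Φ : FourierL2R) : Set L2R :=
  {f : L2R | MemLp (fun ω : ℝ => (Complex.I * ω)⁻¹ * (Φ.F f : ℝ → ℂ) ω) 2 (volume : Measure ℝ)}

/-- The integration operator `𝓘` on `L²(ℝ)`, defined by `(𝓘f)^(ω) = (iω)⁻¹ f̂(ω)`. -/
def Iop (Φ : FourierL2R) (f : L2R) (hf : f ∈ IDom Φ) : L2R :=
  Φ.F.symm (MemLp.toLp _ hf)

/-! ### Auxiliary lemmas -/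

open scoped ENNReal NNReal

lemma qmpMulLeft {c : ℝ} (hc : c ≠ 0) :
    Measure.QuasiMeasurePreserving (fun x : ℝ => c * x) volume volume := by
  refine ⟨(measurable_const_mul c), ?_⟩
  rw [Real.map_volume_mul_left hc]
  exact Measure.smul_absolutelyContinuous

lemma memLp_comp_mul_left {f : ℝ → ℂ} (hf : MemLp f 2 (volume : Measure ℝ)) {c : ℝ} (hc : c ≠ 0) :
    MemLp (fun x : ℝ => f (c * x)) 2 (volume : Measure ℝ) := by
  have h : MemLp f 2 (Measure.map (fun x : ℝ => c * x) volume) := by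
    rw [Real.map_volume_mul_left hc]
    exact hf.smul_measure ENNReal.ofReal_ne_top
  exact h.comp_of_map (measurable_const_mul c).aemeasurable

lemma eLpNorm_comp_mul_left {f : ℝ → ℂ} (hf : AEStronglyMeasurable f (volume : Measure ℝ))
    {c : ℝ} (hc : c ≠ 0) :
    eLpNorm (fun x : ℝ => f (c * x)) 2 (volume : Measure ℝ)
      = ENNReal.ofReal |c⁻¹| ^ (1 / (2:ℝ≥0∞)).toReal * eLpNorm f 2 (volume : Measure ℝ) := by
  have hmap : Measure.map (fun x : ℝ => c * x) volume = ENNReal.ofReal |c⁻¹| • volume :=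
    Real.map_volume_mul_left hc
  have h1 : eLpNorm (f ∘ (fun x : ℝ => c * x)) 2 volume
      = eLpNorm f 2 (Measure.map (fun x : ℝ => c * x) volume) := by
    refine (eLpNorm_map_measure ?_ (measurable_const_mul c).aemeasurable).symm
    rw [hmap]; exact hf.mono_ac Measure.smul_absolutelyContinuous
  rw [show (fun x : ℝ => f (c * x)) = f ∘ (fun x : ℝ => c * x) from rfl, h1, hmap,
    eLpNorm_smul_measure_of_ne_top (by norm_num), smul_eq_mul]

lemma ennreal_half_toReal : ((1 : ℝ≥0∞) / 2).toReal = (2 : ℝ)⁻¹ := by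
  simp [ENNReal.toReal_div]

lemma rpow_half_abs_toReal {t : ℝ} (ht : 0 ≤ t) :
    ((ENNReal.ofReal t) ^ ((2:ℝ)⁻¹)).toReal = Real.sqrt t := by
  rw [← ENNReal.toReal_rpow, ENNReal.toReal_ofReal ht, Real.sqrt_eq_rpow]
  norm_num

lemma eLpNorm_comp_mul_left_toReal {f : ℝ → ℂ} (hf : AEStronglyMeasurable f (volume : Measure ℝ))
    {c : ℝ} (hc : 0 < c) :
    (eLpNorm (fun x : ℝ => f (c * x)) 2 (volume : Measure ℝ)).toReal
      = Real.sqrt c⁻¹ * (eLpNorm f 2 (volume : Measure ℝ)).toReal := by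
  rw [eLpNorm_comp_mul_left hf hc.ne', ENNReal.toReal_mul, ennreal_half_toReal,
    _root_.abs_of_nonneg (inv_nonneg.2 hc.le), rpow_half_abs_toReal (inv_nonneg.2 hc.le)]

lemma sqrt_inv_mul_self {c : ℝ} (hc : 0 < c) : c * Real.sqrt c⁻¹ = Real.sqrt c := by
  rw [Real.sqrt_inv]
  field_simp [(Real.sqrt_pos.2 hc).ne']
  rw [Real.sq_sqrt hc.le]

lemma eLpNorm_dil_toReal {h : ℝ → ℂ} (hm : AEStronglyMeasurable h (volume : Measure ℝ))
    {c : ℝ} (hc : 0 < c) :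
    (eLpNorm (fun x : ℝ => (c:ℂ) * h (c * x)) 2 (volume : Measure ℝ)).toReal
      = Real.sqrt c * (eLpNorm h 2 (volume : Measure ℝ)).toReal := by
  have heq : (fun x : ℝ => (c:ℂ) * h (c * x)) = (c:ℂ) • (fun x : ℝ => h (c * x)) := by
    funext x; simp
  rw [heq, eLpNorm_const_smul, ENNReal.toReal_mul,
    toReal_enorm, Complex.norm_real, Real.norm_eq_abs,
    _root_.abs_of_pos hc, eLpNorm_comp_mul_left_toReal hm hc, ← mul_assoc,
    sqrt_inv_mul_self hc]

lemma eLpNorm_comp_inv_toReal {h : ℝ → ℂ} (hm : AEStronglyMeasurable h (volume : Measure ℝ))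
    {c : ℝ} (hc : 0 < c) :
    (eLpNorm (fun ω : ℝ => h (c⁻¹ * ω)) 2 (volume : Measure ℝ)).toReal
      = Real.sqrt c * (eLpNorm h 2 (volume : Measure ℝ)).toReal := by
  rw [eLpNorm_comp_mul_left_toReal hm (inv_pos.2 hc), inv_inv]

lemma normF (Φ : FourierL2R) (h : L2R) : ‖Φ.F h‖ = Real.sqrt (2 * Real.pi) * ‖h‖ := by
  have hp := Φ.plancherel h
  have h1 : ‖Φ.F h‖ = Real.sqrt (‖Φ.F h‖ ^ 2) := (Real.sqrt_sq (norm_nonneg _)).symm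
  rw [h1, hp, Real.sqrt_mul (by positivity), Real.sqrt_sq (norm_nonneg _)]

lemma plancherel_symm (Φ : FourierL2R) (h : L2R) :
    ‖Φ.F.symm h‖ ^ 2 = (2 * Real.pi)⁻¹ * ‖h‖ ^ 2 := by
  have := Φ.plancherel (Φ.F.symm h)
  rw [LinearEquiv.apply_symm_apply] at this
  have hpi : (0:ℝ) < 2 * Real.pi := by positivity
  field_simp [this]
  rw [this]; ring

lemma fourier_dilation (Φ : FourierL2R) (f g : L2R) {c : ℝ} (hc : 0 < c)
    (hg : (g : ℝ → ℂ) =ᵐ[(volume : Measure ℝ)] fun x => (c : ℂ) * (f : ℝ → ℂ) (c * x)) :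
    (Φ.F g : ℝ → ℂ) =ᵐ[(volume : Measure ℝ)]
      fun ω => (Φ.F f : ℝ → ℂ) (c⁻¹ * ω) := by
  have hc' : c ≠ 0 := hc.ne'
  have hcinv : (c⁻¹ : ℝ) ≠ 0 := inv_ne_zero hc'
  have hT : MemLp (fun ω : ℝ => (Φ.F f : ℝ → ℂ) (c⁻¹ * ω)) 2 (volume : Measure ℝ) :=
    memLp_comp_mul_left (Lp.memLp _) hcinv
  set T : L2R := hT.toLp _ with hTdef
  suffices hFT : Φ.F g = T by
    rw [hFT]; exact hT.coeFn_toLp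
  set K : ℝ := Real.sqrt (2 * Real.pi) * Real.sqrt c * 2 with hKdef
  have hK : 0 ≤ K := by positivity
  have key : ∀ ε : ℝ, 0 < ε → ‖Φ.F g - T‖ ≤ K * ε := by
    intro ε hε
    obtain ⟨ψ₀, hψ₀supp, hψ₀close, hψ₀cont, hψ₀mem⟩ :=
      (Lp.memLp f).exists_hasCompactSupport_eLpNorm_sub_le (p := 2) (by norm_num)
        (ε := ENNReal.ofReal ε) (by simp [hε, hε.le, ENNReal.ofReal_eq_zero, not_le])
    have hψ₀int : Integrable ψ₀ (volume : Measure ℝ) :=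
      hψ₀cont.integrable_of_hasCompactSupport hψ₀supp
    have hDψmem : MemLp (fun x : ℝ => (c:ℂ) * ψ₀ (c * x)) 2 (volume : Measure ℝ) :=
      (memLp_comp_mul_left hψ₀mem hc').const_mul _
    set Dψ : L2R := hDψmem.toLp _ with hDψdef
    set ψ : L2R := hψ₀mem.toLp ψ₀ with hψdef
    have hEψmem : MemLp (fun ω : ℝ => (Φ.F ψ : ℝ → ℂ) (c⁻¹ * ω)) 2 (volume : Measure ℝ) :=
      memLp_comp_mul_left (Lp.memLp _) hcinv
    set Eψ : L2R := hEψmem.toLp _ with hEψdef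
    -- difference f - ψ in L² is small
    have hdiff : (eLpNorm ((f : ℝ → ℂ) - ψ₀) 2 (volume : Measure ℝ)).toReal ≤ ε := by
      refine le_trans (ENNReal.toReal_mono ENNReal.ofReal_ne_top hψ₀close) ?_
      rw [ENNReal.toReal_ofReal hε.le]
    have hfψ : ‖f - ψ‖ ≤ ε := by
      rw [Lp.norm_def]
      refine le_trans (le_of_eq ?_) hdiff
      congr 1
      apply eLpNorm_congr_ae
      filter_upwards [Lp.coeFn_sub f ψ, hψ₀mem.coeFn_toLp] with x h1 h2
      rw [h1]; simp [hψdef, h2]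
    -- Term 1 : ‖g - Dψ‖ = √c ‖f - ψ‖ ≤ √c ε
    have hterm1 : ‖g - Dψ‖ ≤ Real.sqrt c * ε := by
      rw [Lp.norm_def]
      have hae : ((g - Dψ : L2R) : ℝ → ℂ) =ᵐ[volume]
          fun x => (c:ℂ) * (((f : ℝ → ℂ) - ψ₀) (c * x)) := by
        filter_upwards [Lp.coeFn_sub g Dψ, hg, hDψmem.coeFn_toLp] with x h1 h2 h3
        rw [h1]; simp only [Pi.sub_apply, h2, hDψdef, h3, Pi.sub_apply]; ring
      rw [eLpNorm_congr_ae hae,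
        eLpNorm_dil_toReal ((Lp.aestronglyMeasurable f).sub hψ₀mem.aestronglyMeasurable) hc]
      exact mul_le_mul_of_nonneg_left hdiff (Real.sqrt_nonneg c)
    -- Term 3 : ‖Eψ - T‖ = √c ‖F ψ - F f‖ ≤ √c √(2π) ε
    have hterm3 : ‖Eψ - T‖ ≤ Real.sqrt c * (Real.sqrt (2 * Real.pi) * ε) := by
      rw [Lp.norm_def]
      have hae : ((Eψ - T : L2R) : ℝ → ℂ) =ᵐ[volume]
          fun ω => ((Φ.F ψ - Φ.F f : L2R) : ℝ → ℂ) (c⁻¹ * ω) := by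
        have hsub : ∀ᵐ ω : ℝ ∂volume, ((Φ.F ψ - Φ.F f : L2R) : ℝ → ℂ) (c⁻¹ * ω)
            = (Φ.F ψ : ℝ → ℂ) (c⁻¹ * ω) - (Φ.F f : ℝ → ℂ) (c⁻¹ * ω) := by
          exact (qmpMulLeft hcinv).ae (Lp.coeFn_sub (Φ.F ψ) (Φ.F f))
        filter_upwards [Lp.coeFn_sub Eψ T, hEψmem.coeFn_toLp, hT.coeFn_toLp, hsub]
          with ω h1 h2 h3 h4
        rw [h1]; simp only [Pi.sub_apply, hEψdef, hTdef, h2, h3, h4]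
      rw [eLpNorm_congr_ae hae,
        eLpNorm_comp_inv_toReal (Lp.aestronglyMeasurable _) hc]
      refine mul_le_mul_of_nonneg_left ?_ (Real.sqrt_nonneg c)
      have : (eLpNorm ((Φ.F ψ - Φ.F f : L2R) : ℝ → ℂ) 2 volume).toReal = ‖Φ.F ψ - Φ.F f‖ := by
        rw [Lp.norm_def]
      rw [this, ← map_sub, normF]
      refine mul_le_mul_of_nonneg_left ?_ (Real.sqrt_nonneg _)
      rw [← neg_sub f ψ, norm_neg]
      exact hfψ
    -- Term 2 : F Dψ = Eψ
    have hterm2 : Φ.F Dψ = Eψ := by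
      apply Lp.ext
      have hDψint : Integrable ((Dψ : L2R) : ℝ → ℂ) (volume : Measure ℝ) := by
        refine Integrable.congr ?_ hDψmem.coeFn_toLp.symm
        exact ((integrable_comp_mul_left_iff ψ₀ hc').2 hψ₀int).const_mul _
      have hψint : Integrable ((ψ : L2R) : ℝ → ℂ) (volume : Measure ℝ) :=
        Integrable.congr hψ₀int hψ₀mem.coeFn_toLp.symm
      have h1 := Φ.eq_integral Dψ hDψint
      have h2 := Φ.eq_integral ψ hψint
      -- rewrite the integral for Dψ
      have hint1 : ∀ ω : ℝ, (∫ x : ℝ, Complex.exp (-(Complex.I * ω * x)) * (Dψ : ℝ → ℂ) x)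
          = ∫ x : ℝ, Complex.exp (-(Complex.I * ω * x)) * ((c:ℂ) * ψ₀ (c * x)) := by
        intro ω
        refine integral_congr_ae ?_
        filter_upwards [hDψmem.coeFn_toLp] with x hx
        rw [hx]
      have hint2 : ∀ ω : ℝ, (∫ x : ℝ, Complex.exp (-(Complex.I * ω * x)) * (ψ : ℝ → ℂ) x)
          = ∫ x : ℝ, Complex.exp (-(Complex.I * ω * x)) * ψ₀ x := by
        intro ω
        refine integral_congr_ae ?_
        filter_upwards [hψ₀mem.coeFn_toLp] with x hx
        rw [hx]
      -- the substitution x ↦ c x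
      have hsubst : ∀ ω : ℝ, (∫ x : ℝ, Complex.exp (-(Complex.I * ω * x)) * ((c:ℂ) * ψ₀ (c * x)))
          = ∫ y : ℝ, Complex.exp (-(Complex.I * ((c⁻¹ * ω : ℝ) : ℂ) * y)) * ψ₀ y := by
        intro ω
        set G : ℝ → ℂ := fun y => Complex.exp (-(Complex.I * ω * ((c⁻¹ * y : ℝ) : ℂ))) * ψ₀ y
          with hGdef
        have hGc : ∀ x : ℝ, Complex.exp (-(Complex.I * ω * x)) * ((c:ℂ) * ψ₀ (c * x))
            = (c:ℂ) * G (c * x) := by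
          intro x
          simp only [hGdef, inv_mul_cancel_left₀ hc' x]
          ring
        simp only [hGc]
        rw [MeasureTheory.integral_const_mul, Measure.integral_comp_mul_left G c,
          _root_.abs_of_pos (inv_pos.2 hc), Complex.real_smul]
        rw [← mul_assoc, ← Complex.ofReal_mul, mul_inv_cancel₀ hc', Complex.ofReal_one, one_mul]
        refine integral_congr_ae (Filter.Eventually.of_forall fun y => ?_)
        have harg : Complex.I * ω * ((c⁻¹ * y : ℝ) : ℂ)
            = Complex.I * ((c⁻¹ * ω : ℝ) : ℂ) * y := by
          push_cast
          ring
        simp only [hGdef, harg]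
      -- conclude: coe (F Dψ) =ᵐ (F ψ)(c⁻¹ ·) =ᵐ coe Eψ
      have h3 : (Φ.F ψ : ℝ → ℂ) ∘ (fun ω : ℝ => c⁻¹ * ω) =ᵐ[volume]
          (fun ω : ℝ => ∫ x : ℝ, Complex.exp (-(Complex.I * ω * x)) * (ψ : ℝ → ℂ) x)
            ∘ (fun ω : ℝ => c⁻¹ * ω) := (qmpMulLeft hcinv).ae_eq h2
      refine h1.trans (Filter.EventuallyEq.trans ?_ hEψmem.coeFn_toLp.symm)
      filter_upwards [h3] with ω h3ω
      simp only [Function.comp] at h3ω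
      rw [hint1 ω, hsubst ω, ← hint2 (c⁻¹ * ω), ← h3ω]
    -- combine
    have hcomb : ‖Φ.F g - T‖ ≤ ‖Φ.F g - Φ.F Dψ‖ + ‖Eψ - T‖ := by
      rw [hterm2]
      calc ‖Φ.F g - T‖ = ‖(Φ.F g - Eψ) + (Eψ - T)‖ := by rw [sub_add_sub_cancel]
        _ ≤ ‖Φ.F g - Eψ‖ + ‖Eψ - T‖ := norm_add_le _ _
    have hFgD : ‖Φ.F g - Φ.F Dψ‖ ≤ Real.sqrt (2 * Real.pi) * (Real.sqrt c * ε) := by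
      rw [← map_sub, normF]
      exact mul_le_mul_of_nonneg_left hterm1 (Real.sqrt_nonneg _)
    calc ‖Φ.F g - T‖ ≤ ‖Φ.F g - Φ.F Dψ‖ + ‖Eψ - T‖ := hcomb
      _ ≤ Real.sqrt (2 * Real.pi) * (Real.sqrt c * ε)
          + Real.sqrt c * (Real.sqrt (2 * Real.pi) * ε) := add_le_add hFgD hterm3
      _ = K * ε := by rw [hKdef]; ring
  have h0 : ‖Φ.F g - T‖ ≤ 0 := by
    by_contra hcon
    push_neg at hcon
    have hkey := key (‖Φ.F g - T‖ / (K + 1)) (by positivity)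
    have haux : K * (‖Φ.F g - T‖ / (K + 1)) * (K + 1) = K * ‖Φ.F g - T‖ := by
      field_simp
    nlinarith [hkey, hK, hcon]
  have : Φ.F g - T = 0 := by
    rw [← norm_le_zero_iff]; exact h0
  exact sub_eq_zero.mp this

lemma memLp_top_bound {g : ℝ → ℂ} (hg : MemLp g ⊤ (volume : Measure ℝ)) :
    ∃ C : ℝ, 0 ≤ C ∧ ∀ᵐ ω : ℝ ∂(volume : Measure ℝ), ‖g ω‖ ≤ C := by
  refine ⟨(eLpNormEssSup g (volume : Measure ℝ)).toReal, ENNReal.toReal_nonneg, ?_⟩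
  have h1 : eLpNormEssSup g (volume : Measure ℝ) < ⊤ := by
    have := hg.2
    rwa [eLpNorm_exponent_top] at this
  filter_upwards [ae_le_eLpNormEssSup (f := g) (μ := (volume : Measure ℝ))] with ω hω
  calc ‖g ω‖ = ((‖g ω‖₊ : ℝ≥0∞)).toReal := by simp
    _ ≤ _ := ENNReal.toReal_mono h1.ne hω

lemma aesm_conv {g h : ℝ → ℂ} (hg : AEStronglyMeasurable g (volume : Measure ℝ))
    (hh : AEStronglyMeasurable h (volume : Measure ℝ)) :
    AEStronglyMeasurable (fun ω : ℝ => (starRingEnd ℂ) (g ω) * h ω) (volume : Measure ℝ) :=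
  (RCLike.continuous_conj.comp_aestronglyMeasurable hg).mul hh

lemma memLp2_conj_mul {g h : ℝ → ℂ} (hg : MemLp g ⊤ (volume : Measure ℝ))
    (hh : MemLp h 2 (volume : Measure ℝ)) :
    MemLp (fun ω : ℝ => (starRingEnd ℂ) (g ω) * h ω) 2 (volume : Measure ℝ) := by
  obtain ⟨C, hC0, hC⟩ := memLp_top_bound hg
  refine MemLp.of_le (hh.const_mul (C : ℂ))
    (aesm_conv hg.aestronglyMeasurable hh.aestronglyMeasurable) ?_
  filter_upwards [hC] with ω hω
  rw [norm_mul, norm_mul, starRingEnd_apply, norm_star, Complex.norm_real,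
    Real.norm_eq_abs, _root_.abs_of_nonneg hC0]
  exact mul_le_mul_of_nonneg_right hω (norm_nonneg _)

lemma starConvR_eq (Φ : FourierL2R) (w f : L2R)
    (h : MemLp (fun ω => (starRingEnd ℂ) ((Φ.F w : ℝ → ℂ) ω) * (Φ.F f : ℝ → ℂ) ω)
      2 (volume : Measure ℝ)) :
    starConvR Φ w f = Φ.F.symm (h.toLp _) := by
  rw [starConvR, dif_pos h]

lemma norm_starConvR_sq (Φ : FourierL2R) (w f : L2R)
    (h : MemLp (fun ω => (starRingEnd ℂ) ((Φ.F w : ℝ → ℂ) ω) * (Φ.F f : ℝ → ℂ) ω)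
      2 (volume : Measure ℝ)) :
    ‖starConvR Φ w f‖ ^ 2 = (2 * Real.pi)⁻¹
      * ((eLpNorm (fun ω => (starRingEnd ℂ) ((Φ.F w : ℝ → ℂ) ω) * (Φ.F f : ℝ → ℂ) ω)
          2 (volume : Measure ℝ)).toReal) ^ 2 := by
  rw [starConvR_eq Φ w f h, plancherel_symm, Lp.norm_toLp]

lemma norm_neg_I_mul (ω : ℝ) : ‖-(Complex.I * (ω : ℂ))‖ = |ω| := by
  rw [norm_neg, norm_mul, Complex.norm_I, one_mul, Complex.norm_real, Real.norm_eq_abs]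

lemma norm_two_zpow (j : ℤ) : ‖(((2:ℝ) ^ (-j) : ℝ) : ℂ)‖ = ((2:ℝ) ^ j)⁻¹ := by
  rw [Complex.norm_real, Real.norm_eq_abs, _root_.abs_of_pos (zpow_pos (by norm_num) _),
    zpow_neg]

set_option maxHeartbeats 1000000 in
/-- **TI-WVD for the integration operator.** Let `u ∈ L²(ℝ)` with `û`
supported in the annulus `{a ≤ |ω| ≤ b}`, `0 < a ≤ b`, and suppose the dilations
`u_j(x) = 2^j u(2^j x)` form a TI-frame with bounds `A, B`. Define `v_j` by
`v̂_j(ω) = 2^{-j}(-iω) û_j(ω)`. Then `(v_j)` is a TI-frame with bounds `a²A, b²B`, and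
`v_j^* ∗ (𝓘f) = 2^{-j} (u_j^* ∗ f)` for every `f ∈ dom 𝓘`; i.e. `(u_j, v_j, 2^{-j})`
is a TI-DFD for `𝓘`. -/
theorem ti_wvd_for_integration (Φ : FourierL2R) (u : ℝ → ℂ)
    (hu : MemLp u 2 (volume : Measure ℝ))
    (a b : ℝ) (ha : 0 < a) (hab : a ≤ b)
    (hsupp : ∀ᵐ ω : ℝ ∂(volume : Measure ℝ),
      (Φ.F (hu.toLp u) : ℝ → ℂ) ω ≠ 0 → a ≤ |ω| ∧ |ω| ≤ b)
    (huj : ∀ j : ℤ, MemLp (fun x : ℝ => (((2 : ℝ) ^ j : ℝ) : ℂ) * u ((2 : ℝ) ^ j * x))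
      2 (volume : Measure ℝ))
    (A B : ℝ) (hframe : IsTIFrameR Φ (fun j : ℤ => (huj j).toLp _) A B)
    (v : ℤ → L2R)
    (hv : ∀ j : ℤ, (Φ.F (v j) : ℝ → ℂ) =ᵐ[(volume : Measure ℝ)]
      fun ω : ℝ => (((2 : ℝ) ^ (-j) : ℝ) : ℂ) * (-(Complex.I * ω)) *
        (Φ.F ((huj j).toLp _) : ℝ → ℂ) ω) :
    IsTIFrameR Φ v (a ^ 2 * A) (b ^ 2 * B) ∧
    ∀ (f : L2R) (hf : f ∈ IDom Φ) (j : ℤ),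
      starConvR Φ (v j) (Iop Φ f hf) =
        ((2 : ℝ) ^ (-j) : ℝ) • starConvR Φ ((huj j).toLp _) f := by
  obtain ⟨hInfty, hA, hB, hframe2⟩ := hframe
  have hb : 0 < b := lt_of_lt_of_le ha hab
  -- support of the dilated Fourier transforms
  have hsuppj : ∀ j : ℤ, ∀ᵐ ω : ℝ ∂(volume : Measure ℝ),
      ((Φ.F ((huj j).toLp _) : ℝ → ℂ) ω ≠ 0 →
        a ≤ ((2:ℝ) ^ j)⁻¹ * |ω| ∧ ((2:ℝ) ^ j)⁻¹ * |ω| ≤ b) := by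
    intro j
    have hc : (0:ℝ) < (2:ℝ) ^ j := zpow_pos (by norm_num) j
    have hgae : (((huj j).toLp _ : L2R) : ℝ → ℂ) =ᵐ[(volume : Measure ℝ)]
        fun x => ((((2:ℝ) ^ j : ℝ)) : ℂ) * ((hu.toLp u : L2R) : ℝ → ℂ) ((2:ℝ) ^ j * x) := by
      have h1 := (huj j).coeFn_toLp
      have h2 : ∀ᵐ x : ℝ ∂(volume : Measure ℝ),
          ((hu.toLp u : L2R) : ℝ → ℂ) ((2:ℝ) ^ j * x) = u ((2:ℝ) ^ j * x) :=
        (qmpMulLeft hc.ne').ae hu.coeFn_toLp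
      filter_upwards [h1, h2] with x h1x h2x
      rw [h1x, h2x]
    have hdil := fourier_dilation Φ (hu.toLp u) _ hc hgae
    have hsupp' : ∀ᵐ ω : ℝ ∂(volume : Measure ℝ),
        ((Φ.F (hu.toLp u) : ℝ → ℂ) (((2:ℝ) ^ j)⁻¹ * ω) ≠ 0 →
          a ≤ |((2:ℝ) ^ j)⁻¹ * ω| ∧ |((2:ℝ) ^ j)⁻¹ * ω| ≤ b) :=
      (qmpMulLeft (inv_ne_zero hc.ne')).ae hsupp
    filter_upwards [hdil, hsupp'] with ω hd hs hne
    rw [hd] at hne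
    have h3 := hs hne
    rwa [abs_mul, _root_.abs_of_pos (inv_pos.2 hc)] at h3
  -- norms of the multiplier functions
  constructor
  · -- the frame property for v
    refine ⟨?_, by positivity, by positivity, ?_⟩
    · -- L∞ bounds for the v̂ⱼ
      intro j
      obtain ⟨C, hC0, hC⟩ := memLp_top_bound (hInfty j)
      refine memLp_top_of_bound (Lp.aestronglyMeasurable _) (b * C) ?_
      filter_upwards [hv j, hsuppj j, hC] with ω hvω hsω hCω
      rw [hvω]
      by_cases hz : (Φ.F ((huj j).toLp _) : ℝ → ℂ) ω = 0
      · rw [hz, mul_zero, norm_zero]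
        positivity
      · obtain ⟨h1, h2⟩ := hsω hz
        rw [norm_mul, norm_mul, norm_two_zpow, norm_neg_I_mul]
        exact mul_le_mul h2 hCω (norm_nonneg _) hb.le
    · -- the frame inequalities
      intro f
      set m : ℤ → ℝ → ℂ := fun j ω =>
        (starRingEnd ℂ) ((Φ.F ((huj j).toLp _) : ℝ → ℂ) ω) * (Φ.F f : ℝ → ℂ) ω with hmdef
      set w : ℤ → ℝ → ℂ := fun j ω =>
        (starRingEnd ℂ) ((Φ.F (v j) : ℝ → ℂ) ω) * (Φ.F f : ℝ → ℂ) ω with hwdef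
      have hmem_m : ∀ j : ℤ, MemLp (m j) 2 (volume : Measure ℝ) := fun j =>
        memLp2_conj_mul (hInfty j) (Lp.memLp _)
      -- pointwise comparison
      have hpt : ∀ j : ℤ, ∀ᵐ ω : ℝ ∂(volume : Measure ℝ),
          a * ‖m j ω‖ ≤ ‖w j ω‖ ∧ ‖w j ω‖ ≤ b * ‖m j ω‖ := by
        intro j
        filter_upwards [hv j, hsuppj j] with ω hvω hsω
        have hmn : ‖m j ω‖ = ‖(Φ.F ((huj j).toLp _) : ℝ → ℂ) ω‖ * ‖(Φ.F f : ℝ → ℂ) ω‖ := by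
          rw [hmdef]
          simp only [norm_mul, starRingEnd_apply, norm_star]
        have hwn : ‖w j ω‖ = (((2:ℝ) ^ j)⁻¹ * |ω|) * ‖m j ω‖ := by
          rw [hwdef]
          simp only []
          rw [hvω, hmn]
          simp only [norm_mul, starRingEnd_apply, norm_star]
          rw [norm_two_zpow, norm_neg_I_mul]
          ring
        by_cases hz : (Φ.F ((huj j).toLp _) : ℝ → ℂ) ω = 0
        · have hm0 : ‖m j ω‖ = 0 := by rw [hmn, hz, norm_zero, zero_mul]
          rw [hwn, hm0]
          simp
        · obtain ⟨h1, h2⟩ := hsω hz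
          constructor
          · rw [hwn]
            exact mul_le_mul_of_nonneg_right h1 (norm_nonneg _)
          · rw [hwn]
            exact mul_le_mul_of_nonneg_right h2 (norm_nonneg _)
      have hmem_w : ∀ j : ℤ, MemLp (w j) 2 (volume : Measure ℝ) := by
        intro j
        refine MemLp.of_le ((hmem_m j).const_mul (b : ℂ))
          (aesm_conv (Lp.aestronglyMeasurable _) (Lp.aestronglyMeasurable _)) ?_
        filter_upwards [hpt j] with ω hω
        have hbm : ‖(b:ℂ) * m j ω‖ = b * ‖m j ω‖ := by
          rw [norm_mul, Complex.norm_real, Real.norm_eq_abs, _root_.abs_of_pos hb]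
        rw [hbm]
        exact hω.2
      -- comparison of the L² norms
      have hns : ∀ j : ℤ,
          a * (eLpNorm (m j) 2 volume).toReal ≤ (eLpNorm (w j) 2 volume).toReal ∧
          (eLpNorm (w j) 2 volume).toReal ≤ b * (eLpNorm (m j) 2 volume).toReal := by
        intro j
        constructor
        · have hle : eLpNorm (fun ω => (a:ℂ) * m j ω) 2 volume ≤ eLpNorm (w j) 2 volume := by
            refine eLpNorm_mono_ae ?_
            filter_upwards [hpt j] with ω hω
            have ham : ‖(a:ℂ) * m j ω‖ = a * ‖m j ω‖ := by
              rw [norm_mul, Complex.norm_real, Real.norm_eq_abs, _root_.abs_of_pos ha]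
            rw [ham]
            exact hω.1
          have := ENNReal.toReal_mono (hmem_w j).2.ne hle
          rwa [show (fun ω => (a:ℂ) * m j ω) = (a:ℂ) • (m j) from rfl, eLpNorm_const_smul,
            ENNReal.toReal_mul, toReal_enorm, Complex.norm_real,
            Real.norm_eq_abs, _root_.abs_of_pos ha] at this
        · have hle : eLpNorm (w j) 2 volume ≤ eLpNorm (fun ω => (b:ℂ) * m j ω) 2 volume := by
            refine eLpNorm_mono_ae ?_
            filter_upwards [hpt j] with ω hω
            have hbm : ‖(b:ℂ) * m j ω‖ = b * ‖m j ω‖ := by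
              rw [norm_mul, Complex.norm_real, Real.norm_eq_abs, _root_.abs_of_pos hb]
            rw [hbm]
            exact hω.2
          have hfin : eLpNorm (fun ω => (b:ℂ) * m j ω) 2 volume ≠ ⊤ :=
            ((hmem_m j).const_mul (b:ℂ)).2.ne
          have := ENNReal.toReal_mono hfin hle
          rwa [show (fun ω => (b:ℂ) * m j ω) = (b:ℂ) • (m j) from rfl, eLpNorm_const_smul,
            ENNReal.toReal_mul, toReal_enorm, Complex.norm_real,
            Real.norm_eq_abs, _root_.abs_of_pos hb] at this
      -- squared comparison for the summands
      have hsq : ∀ j : ℤ,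
          a ^ 2 * ‖starConvR Φ ((huj j).toLp _) f‖ ^ 2 ≤ ‖starConvR Φ (v j) f‖ ^ 2 ∧
          ‖starConvR Φ (v j) f‖ ^ 2 ≤ b ^ 2 * ‖starConvR Φ ((huj j).toLp _) f‖ ^ 2 := by
        intro j
        have hu2 := norm_starConvR_sq Φ ((huj j).toLp _) f (hmem_m j)
        have hv2 := norm_starConvR_sq Φ (v j) f (hmem_w j)
        obtain ⟨h1, h2⟩ := hns j
        have hpi : (0:ℝ) < (2 * Real.pi)⁻¹ := by positivity
        set M := (eLpNorm (m j) 2 volume).toReal with hM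
        set W := (eLpNorm (w j) 2 volume).toReal with hW
        have hM0 : 0 ≤ M := ENNReal.toReal_nonneg
        have hW0 : 0 ≤ W := ENNReal.toReal_nonneg
        constructor
        · rw [hu2, hv2]
          have : (a * M) ^ 2 ≤ W ^ 2 := by
            apply sq_le_sq' _ h1
            nlinarith
          nlinarith
        · rw [hu2, hv2]
          have : W ^ 2 ≤ (b * M) ^ 2 := by
            apply sq_le_sq' _ h2
            nlinarith
          nlinarith
      -- put the sums together
      by_cases hsum : Summable (fun j : ℤ => ‖starConvR Φ ((huj j).toLp _) f‖ ^ 2)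
      · have hsumv : Summable (fun j : ℤ => ‖starConvR Φ (v j) f‖ ^ 2) := by
          refine Summable.of_nonneg_of_le (fun j => sq_nonneg _) (fun j => (hsq j).2) ?_
          exact hsum.mul_left (b ^ 2)
        constructor
        · calc a ^ 2 * A * ‖f‖ ^ 2 = a ^ 2 * (A * ‖f‖ ^ 2) := by ring
            _ ≤ a ^ 2 * ∑' j : ℤ, ‖starConvR Φ ((huj j).toLp _) f‖ ^ 2 :=
              mul_le_mul_of_nonneg_left (hframe2 f).1 (sq_nonneg a)
            _ = ∑' j : ℤ, a ^ 2 * ‖starConvR Φ ((huj j).toLp _) f‖ ^ 2 := (tsum_mul_left).symm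
            _ ≤ ∑' j : ℤ, ‖starConvR Φ (v j) f‖ ^ 2 :=
              Summable.tsum_le_tsum (fun j => (hsq j).1) (hsum.mul_left _) hsumv
        · calc ∑' j : ℤ, ‖starConvR Φ (v j) f‖ ^ 2
              ≤ ∑' j : ℤ, b ^ 2 * ‖starConvR Φ ((huj j).toLp _) f‖ ^ 2 :=
              Summable.tsum_le_tsum (fun j => (hsq j).2) hsumv (hsum.mul_left _)
            _ = b ^ 2 * ∑' j : ℤ, ‖starConvR Φ ((huj j).toLp _) f‖ ^ 2 := tsum_mul_left
            _ ≤ b ^ 2 * (B * ‖f‖ ^ 2) :=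
              mul_le_mul_of_nonneg_left (hframe2 f).2 (sq_nonneg b)
            _ = b ^ 2 * B * ‖f‖ ^ 2 := by ring
      · -- non-summable case: f = 0
        have htsum0 : ∑' j : ℤ, ‖starConvR Φ ((huj j).toLp _) f‖ ^ 2 = 0 :=
          tsum_eq_zero_of_not_summable hsum
        have hf0 : ‖f‖ ^ 2 ≤ 0 := by
          have := (hframe2 f).1
          rw [htsum0] at this
          nlinarith
        have hfz : f = 0 := by
          have : ‖f‖ = 0 := by nlinarith [norm_nonneg f, sq_nonneg ‖f‖]
          exact norm_eq_zero.mp this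
        have hzero : ∀ j : ℤ, ‖starConvR Φ (v j) f‖ ^ 2 = 0 := by
          intro j
          have hW0 : eLpNorm (w j) 2 volume = 0 := by
            rw [eLpNorm_eq_zero_iff
              (aesm_conv (Lp.aestronglyMeasurable _) (Lp.aestronglyMeasurable _)) (by norm_num)]
            have : (Φ.F f : ℝ → ℂ) =ᵐ[(volume : Measure ℝ)] 0 := by
              rw [hfz, map_zero]
              exact Lp.coeFn_zero ℂ 2 volume
            filter_upwards [this] with ω hω
            simp only [Pi.zero_apply] at hω
            simp [hω]
          rw [norm_starConvR_sq Φ (v j) f (hmem_w j),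
            show eLpNorm (fun ω : ℝ => (starRingEnd ℂ) ((Φ.F (v j) : ℝ → ℂ) ω)
              * (Φ.F f : ℝ → ℂ) ω) 2 (volume : Measure ℝ) = 0 from hW0]
          simp
        have htv : ∑' j : ℤ, ‖starConvR Φ (v j) f‖ ^ 2 = 0 := by
          rw [tsum_congr hzero]
          exact tsum_zero
        rw [htv, hfz]
        refine ⟨by simp, by simp⟩
  · -- the quasi-singular-value relation
    intro f hf j
    set m : ℝ → ℂ := fun ω =>
      (starRingEnd ℂ) ((Φ.F ((huj j).toLp _) : ℝ → ℂ) ω) * (Φ.F f : ℝ → ℂ) ω with hmdef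
    have hm : MemLp m 2 (volume : Measure ℝ) := memLp2_conj_mul (hInfty j) (Lp.memLp _)
    have hIf : (Φ.F (Iop Φ f hf) : ℝ → ℂ) =ᵐ[(volume : Measure ℝ)]
        fun ω : ℝ => (Complex.I * ω)⁻¹ * (Φ.F f : ℝ → ℂ) ω := by
      show ((Φ.F (Φ.F.symm (MemLp.toLp _ hf)) : L2R) : ℝ → ℂ) =ᵐ[(volume : Measure ℝ)] _
      rw [LinearEquiv.apply_symm_apply]
      exact MemLp.coeFn_toLp hf
    have hae0 : ∀ᵐ ω : ℝ ∂(volume : Measure ℝ), ω ≠ 0 := by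
      rw [ae_iff]
      have h0 : volume ({(0:ℝ)} : Set ℝ) = 0 := Real.volume_singleton
      simpa using h0
    have hweq : (fun ω : ℝ => (starRingEnd ℂ) ((Φ.F (v j) : ℝ → ℂ) ω)
        * (Φ.F (Iop Φ f hf) : ℝ → ℂ) ω)
        =ᵐ[(volume : Measure ℝ)] fun ω => ((((2:ℝ) ^ (-j) : ℝ)) : ℂ) * m ω := by
      filter_upwards [hv j, hIf, hae0] with ω h1 h2 h3
      rw [h1, h2, hmdef]
      have hIω : (Complex.I * (ω:ℂ)) ≠ 0 :=
        mul_ne_zero Complex.I_ne_zero (Complex.ofReal_ne_zero.mpr h3)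
      simp only [map_mul, map_neg, Complex.conj_I, Complex.conj_ofReal]
      have hval : (Complex.I * (ω:ℂ))⁻¹ * (Complex.I * (ω:ℂ)) = 1 := inv_mul_cancel₀ hIω
      linear_combination ((((2:ℝ) ^ (-j) : ℝ)) : ℂ)
        * (starRingEnd ℂ) ((Φ.F ((huj j).toLp _) : ℝ → ℂ) ω)
        * ((Φ.F f : ℝ → ℂ) ω) * hval
    have hmw : MemLp (fun ω : ℝ => (starRingEnd ℂ) ((Φ.F (v j) : ℝ → ℂ) ω)
        * (Φ.F (Iop Φ f hf) : ℝ → ℂ) ω) 2 (volume : Measure ℝ) :=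
      MemLp.ae_eq hweq.symm (hm.const_mul _)
    rw [starConvR_eq Φ (v j) (Iop Φ f hf) hmw, starConvR_eq Φ ((huj j).toLp _) f hm]
    have htoLp : hmw.toLp _ = ((((2:ℝ) ^ (-j) : ℝ)) : ℂ) • hm.toLp _ := by
      rw [← MemLp.toLp_const_smul]
      apply MemLp.toLp_congr
      refine hweq.trans ?_
      filter_upwards [] with ω
      rfl
    rw [htoLp, _root_.map_smul, Complex.coe_smul]
    rfl

end
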